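/- Let q = p^n ≡ 3 (mod 4) be an odd prime power with p ≠ 3, and χ the quadratic character of 𝔽_q. Then ∑_{x ∈ 𝔽_q} χ(x(3x²+2x+3)) = ∑_{x ∈ 𝔽_q} χ(x(x+1)(x−2)). -/

import Mathlib

open Finset

-- root counting: #{x | x^2 - t*x + b = 0} = χ(t²-4b) + 1
lemma root_count {F : Type*} [Field F] [Fintype F] [DecidableEq F]
    (hF : ringChar F ≠ 2) (t b : F) :
    (((univ : Finset F).filter (fun x => x ^ 2 - t * x + b = 0)).card : ℤ)
      = quadraticChar F (t ^ 2 - 4 * b) + 1 := by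
  have h2 : (2 : F) ≠ 0 := Ring.two_ne_zero hF
  have h4 : (4 : F) ≠ 0 := by
    rw [show (4 : F) = 2 * 2 by norm_num]; exact mul_ne_zero h2 h2
  have hc := quadraticChar_card_sqrts hF (t ^ 2 - 4 * b)
  rw [← hc]
  congr 1
  rw [show {x : F | x ^ 2 = t ^ 2 - 4 * b}.toFinset
      = (univ : Finset F).filter (fun x => x ^ 2 = t ^ 2 - 4 * b) by
    ext x; simp [Set.mem_toFinset]]
  apply Finset.card_bij' (fun x _ => 2 * x - t) (fun y _ => (y + t) / 2)
  · intro x hx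
    simp only [mem_filter, mem_univ, true_and] at hx ⊢
    linear_combination 4 * hx
  · intro y hy
    simp only [mem_filter, mem_univ, true_and] at hy ⊢
    have hh : ((y + t) / 2) ^ 2 - t * ((y + t) / 2) + b = (y ^ 2 - (t ^ 2 - 4 * b)) / 4 := by
      field_simp
      ring
    rw [hh, hy]
    simp
  · intro x _; field_simp; ring
  · intro y _; field_simp; ring

lemma key_iso {F : Type*} [Field F] [Fintype F] [DecidableEq F]
    (hF : ringChar F ≠ 2) (a b : F) (hb : b ≠ 0) :
    ∑ x : F, quadraticChar F (x * (x ^ 2 + a * x + b))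
      = ∑ x : F, quadraticChar F (x * (x ^ 2 - 2 * a * x + (a ^ 2 - 4 * b))) := by
  set χ := quadraticChar F with hχ
  have hT : ∑ x : F, ∑ t : F, (if x ^ 2 - t * x + b = 0 then χ (t + a) else 0)
      = ∑ x : F, χ (x * (x ^ 2 + a * x + b)) := by
    apply Finset.sum_congr rfl
    intro x _
    by_cases hx : x = 0
    · subst hx
      simp only [zero_mul, hχ, quadraticChar_zero]
      apply Finset.sum_eq_zero
      intro t _
      rw [if_neg]
      intro h
      apply hb
      linear_combination h
    · have hcond : ∀ t : F, (x ^ 2 - t * x + b = 0) ↔ t = (x ^ 2 + b) * x⁻¹ := by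
        intro t
        rw [eq_comm]
        constructor
        · intro h
          field_simp
          linear_combination h
        · intro h
          field_simp at h
          linear_combination h
      simp only [hcond]
      rw [Finset.sum_ite_eq' Finset.univ ((x ^ 2 + b) * x⁻¹) (fun t => χ (t + a))]
      rw [if_pos (Finset.mem_univ _)]
      have harg : x * (x ^ 2 + a * x + b) = x ^ 2 * ((x ^ 2 + b) * x⁻¹ + a) := by
        field_simp
        ring
      rw [harg, map_mul, quadraticChar_sq_one' hx, one_mul]
  have hT2 : ∑ x : F, ∑ t : F, (if x ^ 2 - t * x + b = 0 then χ (t + a) else 0)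
      = ∑ t : F, (χ (t ^ 2 - 4 * b) + 1) * χ (t + a) := by
    rw [Finset.sum_comm]
    apply Finset.sum_congr rfl
    intro t _
    rw [← Finset.sum_filter, Finset.sum_const, nsmul_eq_mul, ← root_count hF t b]
  rw [← hT, hT2]
  have hsplit : ∑ t : F, (χ (t ^ 2 - 4 * b) + 1) * χ (t + a)
      = (∑ t : F, χ ((t ^ 2 - 4 * b) * (t + a))) + ∑ t : F, χ (t + a) := by
    rw [← Finset.sum_add_distrib]
    apply Finset.sum_congr rfl
    intro t _
    rw [map_mul, add_mul, one_mul]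
  rw [hsplit]
  have hz : ∑ t : F, χ (t + a) = 0 := by
    rw [Fintype.sum_equiv (Equiv.addRight a) (fun t => χ (t + a)) (fun t => χ t) (fun t => rfl)]
    exact quadraticChar_sum_zero hF
  rw [hz, add_zero]
  apply Fintype.sum_equiv (Equiv.addRight a)
  intro t
  simp only [Equiv.coe_addRight]
  congr 1
  ring

theorem stmt4 (p n : ℕ) (hp : p.Prime) (hp2 : p ≠ 2) (hp3 : p ≠ 3) (hn : 0 < n)
    (F : Type*) [Field F] [Fintype F] [DecidableEq F]
    (hcard : Fintype.card F = p ^ n) (hq : p ^ n % 4 = 3) :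
    ∑ x : F, quadraticChar F (x * (3 * x ^ 2 + 2 * x + 3)) = (∑ x : F, quadraticChar F (x * (x + 1) * (x - 2))) := by
  have _i : CharP F (ringChar F) := ringChar.charP F
  obtain ⟨m, hmp, hm⟩ := FiniteField.card F (ringChar F)
  have hrc : ringChar F = p := by
    have hd : ringChar F ∣ p ^ n := by
      rw [← hcard, hm]
      exact dvd_pow_self _ (by exact_mod_cast m.pos.ne')
    exact (Nat.prime_dvd_prime_iff_eq hmp hp).mp (hmp.dvd_of_dvd_pow hd)
  have hF : ringChar F ≠ 2 := by rw [hrc]; exact hp2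
  have h3 : (3 : F) ≠ 0 := by
    intro h
    have : ringChar F ∣ 3 := by
      rw [← ringChar.spec]
      exact_mod_cast h
    rw [hrc] at this
    exact hp3 ((Nat.prime_dvd_prime_iff_eq hp Nat.prime_three).mp this)
  have h2F : (2 : F) ≠ 0 := Ring.two_ne_zero hF
  have h9 : (9 : F) ≠ 0 := by
    rw [show (9 : F) = 3 * 3 by norm_num]; exact mul_ne_zero h3 h3
  have h8 : (8 : F) ≠ 0 := by
    rw [show (8 : F) = 2 * 2 * 2 by norm_num]
    exact mul_ne_zero (mul_ne_zero h2F h2F) h2F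
  have h3i : (3 : F)⁻¹ ≠ 0 := inv_ne_zero h3
  have step1 : ∑ x : F, quadraticChar F (x * (x ^ 2 + 2 * x + 9))
      = ∑ x : F, quadraticChar F (x * (3 * x ^ 2 + 2 * x + 3)) := by
    apply Fintype.sum_equiv (Equiv.mulLeft₀ (3 : F)⁻¹ h3i)
    intro y
    simp only [Equiv.mulLeft₀_apply]
    have harg : ((3 : F)⁻¹ * y) * (3 * ((3 : F)⁻¹ * y) ^ 2 + 2 * ((3 : F)⁻¹ * y) + 3)
        = ((3 : F)⁻¹) ^ 2 * (y * (y ^ 2 + 2 * y + 9)) := by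
      field_simp
      ring
    conv_rhs => rw [harg, map_mul]
    rw [quadraticChar_sq_one' h3i, one_mul]
  have step2 := key_iso hF (2 : F) (9 : F) h9
  have step3 : ∑ x : F, quadraticChar F (x * (x ^ 2 - 2 * 2 * x + (2 ^ 2 - 4 * 9)))
      = ∑ x : F, quadraticChar F (x * (x + 1) * (x - 2)) := by
    refine (Fintype.sum_equiv (Equiv.mulLeft₀ (4 : F) (by
      rw [show (4 : F) = 2 * 2 by norm_num]; exact mul_ne_zero h2F h2F)) _ _ ?_).symm
    intro y
    simp only [Equiv.mulLeft₀_apply]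
    have harg : ((4 : F) * y) * (((4 : F) * y) ^ 2 - 2 * 2 * ((4 : F) * y) + ((2 : F) ^ 2 - 4 * 9))
        = (8 : F) ^ 2 * (y * (y + 1) * (y - 2)) := by ring
    conv_rhs => rw [harg, map_mul]
    rw [quadraticChar_sq_one' h8, one_mul]
  rw [← step1, step2, step3]
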